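/- arXiv:0806.4580 — 2 statements merged into one kernel-verified Lean document; each statement's English description precedes it below -/
import Mathlib

section
/- Let L₁ and L₂ be positive integers and suppose that S₁ ⊆ [0, L₁] and S₂ ⊆ [0, L₂] are sets of integers. If max{L₁, L₂} ≤ |S₁| + |S₂| - 2, then every integer g with L₁ + L₂ - (|S₁| + |S₂| - 2) ≤ g ≤ |S₁| + |S₂| - 2 lies in the sumset S₁ + S₂; that is, [L₁ + L₂ - (|S₁| + |S₂| - 2), |S₁| + |S₂| - 2] ⊆ S₁ + S₂. -/
open Finset Pointwise

theorem stmt_2 (L₁ L₂ : ℤ) (hL₁ : 0 < L₁) (hL₂ : 0 < L₂)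
    (S₁ S₂ : Finset ℤ) (hS₁ : S₁ ⊆ Finset.Icc 0 L₁) (hS₂ : S₂ ⊆ Finset.Icc 0 L₂)
    (hmax : max L₁ L₂ ≤ (S₁.card : ℤ) + (S₂.card : ℤ) - 2) :
    Finset.Icc (L₁ + L₂ - ((S₁.card : ℤ) + (S₂.card : ℤ) - 2))
        ((S₁.card : ℤ) + (S₂.card : ℤ) - 2) ⊆ S₁ + S₂ := by
  intro g hg
  simp only [Finset.mem_Icc] at hg
  have hmax1 : L₁ ≤ (S₁.card : ℤ) + (S₂.card : ℤ) - 2 := le_trans (le_max_left _ _) hmax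
  have hmax2 : L₂ ≤ (S₁.card : ℤ) + (S₂.card : ℤ) - 2 := le_trans (le_max_right _ _) hmax
  set S₂' := S₂.image (fun x => g - x) with hS₂'def
  by_cases hdis : Disjoint S₁ S₂'
  · exfalso
    have hsub : S₁ ∪ S₂' ⊆ Finset.Icc (min 0 (g - L₂)) (max L₁ g) := by
      intro x hx
      simp only [Finset.mem_union] at hx
      simp only [Finset.mem_Icc]
      rcases hx with hx | hx
      · have h := hS₁ hx; simp only [Finset.mem_Icc] at h
        exact ⟨le_trans (min_le_left _ _) h.1, le_trans h.2 (le_max_left _ _)⟩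
      · simp only [hS₂'def, Finset.mem_image] at hx
        obtain ⟨y, hy, rfl⟩ := hx
        have h := hS₂ hy; simp only [Finset.mem_Icc] at h
        exact ⟨le_trans (min_le_right _ _) (by linarith [h.2]),
               le_trans (by linarith [h.1]) (le_max_right _ _)⟩
    have hcard := Finset.card_le_card hsub
    rw [Finset.card_union_of_disjoint hdis] at hcard
    have hcard2 : S₂'.card = S₂.card :=
      Finset.card_image_of_injective _ (fun a b h => by linarith)
    rw [hcard2, Int.card_Icc] at hcard
    have hnn : (0 : ℤ) ≤ max L₁ g + 1 - min 0 (g - L₂) := by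
      have h1 : min 0 (g - L₂) ≤ 0 := min_le_left _ _
      have h2 : (0 : ℤ) ≤ max L₁ g + 1 := by
        have := le_max_left L₁ g; linarith
      first | linarith | linarith [min_eq_right h2] | linarith [min_eq_left h2] | linarith [max_eq_left h1, min_eq_right h2] | linarith [max_eq_right h1, min_eq_left h2]
    have hcast : ((S₁.card : ℤ) + (S₂.card : ℤ)) ≤ max L₁ g + 1 - min 0 (g - L₂) := by
      have := Int.toNat_of_nonneg hnn
      exact_mod_cast this ▸ (by exact_mod_cast hcard :
        ((S₁.card + S₂.card : ℕ) : ℤ) ≤ ((max L₁ g + 1 - min 0 (g - L₂)).toNat : ℤ))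
    rcases le_total L₁ g with h1 | h1 <;> rcases le_total 0 (g - L₂) with h2 | h2 <;>
      simp [max_eq_right, max_eq_left, min_eq_left, min_eq_right, h1, h2] at hcast <;>
      first | linarith | linarith [min_eq_right h2] | linarith [min_eq_left h2] | linarith [max_eq_left h1, min_eq_right h2] | linarith [max_eq_right h1, min_eq_left h2]
  · rw [Finset.not_disjoint_iff] at hdis
    obtain ⟨x, hx1, hx2⟩ := hdis
    simp only [hS₂'def, Finset.mem_image] at hx2
    obtain ⟨y, hy, hxy⟩ := hx2
    have : g = x + y := by linarith
    rw [this]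
    exact Finset.add_mem_add hx1 hy
end

section
/- Let l ≥ 3 and m be integers with 1 ≤ m < l/2, set n := 2m + 2 and κ := ⌈(l-1)/(n-2)⌉ - 1, and let A := [0, m] ∪ [l - m, l]. Then the sum of 2κ copies of A satisfies 2κ·A = ⋃_{j=0}^{2κ} [j(l-m), j(l-m) + 2κm]. Moreover, if the fractional part of (l-1)/(n-2) is greater than 1/2, then 2κ·A does not contain a block of consecutive integers of length l, i.e., there is no integer a with {a, a+1, …, a+l} ⊆ 2κ·A. -/
open Finset Pointwise

lemma sum_copies (l m : ℤ) (hm : 1 ≤ m) (k : ℕ) :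
    ∑ _i ∈ Finset.range k, (Finset.Icc (0:ℤ) m ∪ Finset.Icc (l-m) l) =
      (Finset.Icc (0:ℤ) (k:ℤ)).biUnion
        (fun j => Finset.Icc (j*(l-m)) (j*(l-m)+(k:ℤ)*m)) := by
  induction k with
  | zero =>
    ext x
    simp
  | succ k ih =>
    rw [Finset.sum_range_succ, ih]
    ext x
    simp only [Finset.mem_add, Finset.mem_biUnion, Finset.mem_Icc, Finset.mem_union,
      Nat.cast_add, Nat.cast_one]
    have hkm : (0:ℤ) ≤ (k:ℤ)*m := by positivity
    constructor
    · rintro ⟨y, ⟨j, ⟨hj0, hjk⟩, hy1, hy2⟩, a, ha, rfl⟩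
      rcases ha with ⟨ha0, ham⟩ | ⟨hal, hau⟩
      · exact ⟨j, ⟨hj0, by linarith⟩, by linarith, by nlinarith⟩
      · have e : (j+1)*(l-m) = j*(l-m)+(l-m) := by ring
        exact ⟨j+1, ⟨by linarith, by linarith⟩, by linarith, by nlinarith⟩
    · rintro ⟨j, ⟨hj0, hjk1⟩, hx1, hx2⟩
      have ht0 : 0 ≤ x - j*(l-m) := by linarith
      have htm : x - j*(l-m) ≤ ((k:ℤ)+1)*m := by linarith
      set t := x - j*(l-m) with ht
      have h1 : 0 ≤ min t ((k:ℤ)*m) := le_min ht0 hkm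
      have h2 : min t ((k:ℤ)*m) ≤ (k:ℤ)*m := min_le_right _ _
      have h3 : 0 ≤ t - min t ((k:ℤ)*m) := sub_nonneg.2 (min_le_left _ _)
      have h4 : t - min t ((k:ℤ)*m) ≤ m := by
        rcases le_total t ((k:ℤ)*m) with h | h
        · simp [min_eq_left h]; linarith
        · rw [min_eq_right h]; nlinarith
      by_cases hjk : j ≤ (k:ℤ)
      · refine ⟨j*(l-m) + min t ((k:ℤ)*m), ⟨j, ⟨hj0, hjk⟩, by linarith, by linarith⟩,
          t - min t ((k:ℤ)*m), Or.inl ⟨h3, h4⟩, by ring⟩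
      · have hj : j = (k:ℤ)+1 := le_antisymm hjk1 (by linarith [not_le.mp hjk])
        refine ⟨(k:ℤ)*(l-m) + min t ((k:ℤ)*m), ⟨(k:ℤ), ⟨by positivity, le_refl _⟩,
          by linarith, by linarith⟩,
          (l-m) + (t - min t ((k:ℤ)*m)), Or.inr ⟨by linarith, by linarith⟩, ?_⟩
        have e : t = x - ((k:ℤ)+1)*(l-m) := by rw [ht, hj]
        linarith [e]

theorem stmt_13 (l m n κ : ℤ) (hl : 3 ≤ l) (hm : 1 ≤ m) (hml : 2 * m < l)
    (hn : n = 2 * m + 2)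
    (hκ : κ = ⌈((l : ℚ) - 1) / ((n : ℚ) - 2)⌉ - 1)
    (A : Finset ℤ) (hA : A = Finset.Icc 0 m ∪ Finset.Icc (l - m) l) :
    (∑ _i ∈ Finset.range (2 * κ).toNat, A =
        (Finset.Icc (0 : ℤ) (2 * κ)).biUnion
          (fun j => Finset.Icc (j * (l - m)) (j * (l - m) + 2 * κ * m))) ∧
      (Int.fract (((l : ℚ) - 1) / ((n : ℚ) - 2)) > 1 / 2 →
        ¬ ∃ a : ℤ, Finset.Icc a (a + l) ⊆ ∑ _i ∈ Finset.range (2 * κ).toNat, A) := by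
  have hmq : (0:ℚ) < 2*(m:ℚ) := by
    have : (1:ℚ) ≤ (m:ℚ) := by exact_mod_cast hm
    linarith
  have hd2 : (n:ℚ) - 2 = 2*(m:ℚ) := by rw [hn]; push_cast; ring
  set x : ℚ := ((l:ℚ)-1)/((n:ℚ)-2) with hxdef
  have hx1 : (κ:ℚ) < x := by
    have h := Int.ceil_lt_add_one x
    rw [hκ]; push_cast; linarith
  have hx2 : x ≤ (κ:ℚ)+1 := by
    have h := Int.le_ceil x
    rw [hκ]; push_cast; linarith
  have hb1 : 2*m*κ < l-1 := by
    have : (κ:ℚ) * (2*(m:ℚ)) < (l:ℚ)-1 := by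
      rw [← lt_div_iff₀ hmq, ← hd2]; exact hx1
    have h2 : ((2*m*κ : ℤ):ℚ) < ((l-1 : ℤ):ℚ) := by push_cast; linarith
    exact_mod_cast h2
  have hb2 : l-1 ≤ 2*m*(κ+1) := by
    have : (l:ℚ)-1 ≤ ((κ:ℚ)+1) * (2*(m:ℚ)) := by
      rw [← div_le_iff₀ hmq, ← hd2]; exact hx2
    have h2 : ((l-1 : ℤ):ℚ) ≤ ((2*m*(κ+1) : ℤ):ℚ) := by push_cast; linarith
    exact_mod_cast h2
  have hκ0 : 0 ≤ κ := by nlinarith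
  have hN : (((2*κ).toNat : ℤ)) = 2*κ := Int.toNat_of_nonneg (by linarith)
  have hsum := sum_copies l m hm (2*κ).toNat
  rw [hN] at hsum
  rw [hA]
  constructor
  · exact hsum
  · intro hfr
    rintro ⟨a, hsub⟩
    set r : ℤ := l - 1 - 2*m*κ with hrdef
    have hr1 : 1 ≤ r := by omega
    have e2 : 2*m*(κ+1) = 2*m*κ + 2*m := by ring
    have hrd : r ≤ 2*m := by omega
    have hxeq : x = (κ:ℚ) + (r:ℚ)/(2*(m:ℚ)) := by
      rw [hxdef, hd2, hrdef]
      field_simp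
      push_cast
      ring
    have hrm : m + 1 ≤ r := by
      rcases eq_or_lt_of_le hrd with he | hlt
      · exfalso
        have : x = ((κ+1 : ℤ):ℚ) := by
          rw [hxeq, he]; push_cast; field_simp
        rw [this, Int.fract_intCast] at hfr
        norm_num at hfr
      · have hfr' : Int.fract x = (r:ℚ)/(2*(m:ℚ)) := by
          rw [hxeq, Int.fract_intCast_add]
          refine Int.fract_eq_self.mpr ⟨by positivity, ?_⟩
          rw [div_lt_one hmq]
          exact_mod_cast hlt
        rw [hfr'] at hfr
        rw [gt_iff_lt, lt_div_iff₀ hmq] at hfr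
        have : ((m:ℚ)) < (r:ℚ) := by linarith
        exact_mod_cast this
    have hmem : ∀ z ∈ Finset.Icc a (a+l),
        ∃ j : ℤ, (0 ≤ j ∧ j ≤ 2*κ) ∧ j*(l-m) ≤ z ∧ z ≤ j*(l-m)+2*κ*m := by
      intro z hz
      have := hsub hz
      rw [hsum] at this
      simpa [Finset.mem_biUnion, Finset.mem_Icc] using this
    have hNm : 2*κ*m = l-1-r := by rw [hrdef]; ring
    obtain ⟨j, ⟨hj0, hjN⟩, hja1, hja2⟩ := hmem a (by simp [Finset.mem_Icc]; linarith)
    obtain ⟨j', ⟨hj'0, hj'N⟩, h1, h2⟩ := hmem (j*(l-m)+2*κ*m+1)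
      (by simp only [Finset.mem_Icc]; constructor <;> linarith)
    rcases le_or_gt j' j with h | h
    · have : j'*(l-m) ≤ j*(l-m) := by nlinarith
      linarith
    · have hj1 : j + 1 ≤ j' := h
      have : (j+1)*(l-m) ≤ j'*(l-m) := by nlinarith
      nlinarith
end
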